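/- Let G = (V,E) be a locally finite, simple, strongly connected directed d-regular graph satisfying condition (a): for every edge (x, y) ∈ E, Γ^out(x) ∩ Γ^out(y) = ∅, and suppose d_u^out = 1 for every vertex u. Then G is Ricci-flat if and only if G is a directed cycle (i.e., G is isomorphic to the graph with vertices {x_1, …, x_n} and edges {(x_i, x_{i+1}) : 1 ≤ i ≤ n−1} ∪ {(x_n, x_1)} for some n ≥ 3). -/
import Mathlib


open Filter Set Topology

variable {V : Type*}

/-- The out-neighborhood of a vertex. -/
def outN (E : V → V → Prop) (x : V) : Set V := {y | E x y}

/-- The in-neighborhood of a vertex. -/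
def inN (E : V → V → Prop) (x : V) : Set V := {y | E y x}

/-- The neighborhood `Γ(x) = Γ^in(x) ∪ Γ^out(x)` of a vertex. -/
def nbhd (E : V → V → Prop) (x : V) : Set V := inN E x ∪ outN E x

/-- The degree `d_x = |Γ(x)|`. -/
noncomputable def deg (E : V → V → Prop) (x : V) : ℕ := (nbhd E x).ncard

/-- The out-degree `d_x^out = |Γ^out(x)|`. -/
noncomputable def outDeg (E : V → V → Prop) (x : V) : ℕ := (outN E x).ncard

/-- The in-degree `d_x^in = |Γ^in(x)|`. -/
noncomputable def inDeg (E : V → V → Prop) (x : V) : ℕ := (inN E x).ncard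

/-- A directed graph is locally finite if every vertex has finite degree. -/
def LocFin (E : V → V → Prop) : Prop := ∀ x, (nbhd E x).Finite

/-- A directed graph (with edges given by a relation, hence no multi-edges) is simple when
it has no loops. -/
def NoLoops (E : V → V → Prop) : Prop := ∀ x, ¬ E x x

/-- `f 0, f 1, …, f n` is a directed walk of length `n` (consecutive pairs are edges). -/
def IsDiWalk (E : V → V → Prop) (n : ℕ) (f : ℕ → V) : Prop := ∀ i, i < n → E (f i) (f (i + 1))

/-- A directed graph is strongly connected if for any two vertices there exists a
directed path (of length at least one) from one to the other. -/
def StronglyConnected (E : V → V → Prop) : Prop :=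
  ∀ x y : V, ∃ n, 1 ≤ n ∧ ∃ f : ℕ → V, f 0 = x ∧ f n = y ∧ IsDiWalk E n f

/-- The distance `d(x,y)`: the length of a shortest directed path from `x` to `y`. -/
noncomputable def ddist (E : V → V → Prop) (x y : V) : ℕ :=
  sInf {n : ℕ | ∃ f : ℕ → V, f 0 = x ∧ f n = y ∧ IsDiWalk E n f}

open Classical in
/-- The probability measure `m_x^α`. -/
noncomputable def mAlpha (E : V → V → Prop) (α : ℝ) (x : V) : V → ℝ := fun v =>
  if v = x then α + (1 - α) * (inDeg E x : ℝ) / (deg E x : ℝ)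
  else if E x v then (1 - α) / (deg E x : ℝ)
  else 0

/-- A coupling between `m_x^α` and `m_y^α`: a map `A : V × V → [0,1]` (of finite support)
whose marginals are `m_x^α` and `m_y^α`. -/
def IsCoupling (E : V → V → Prop) (α : ℝ) (x y : V) (A : V → V → ℝ) : Prop :=
  (Function.support fun p : V × V => A p.1 p.2).Finite ∧
  (∀ u v, A u v ∈ Set.Icc (0 : ℝ) 1) ∧
  (∀ u, ∑ᶠ v, A u v = mAlpha E α x u) ∧
  (∀ v, ∑ᶠ u, A u v = mAlpha E α y v)

/-- The 1-Wasserstein distance `W(m_x^α, m_y^α)`. -/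
noncomputable def Wass (E : V → V → Prop) (α : ℝ) (x y : V) : ℝ :=
  sInf {w : ℝ | ∃ A : V → V → ℝ, IsCoupling E α x y A ∧
    w = ∑ᶠ u, ∑ᶠ v, A u v * (ddist E u v : ℝ)}

/-- The α-Ricci curvature `κ_α(x,y) = 1 − W(m_x^α, m_y^α)/d(x,y)`. -/
noncomputable def ricciAlpha (E : V → V → Prop) (α : ℝ) (x y : V) : ℝ :=
  1 - Wass E α x y / (ddist E x y : ℝ)

/-- `RicciTendsto E x y k` means the Ricci curvature `κ(x,y) = lim_{α→1} κ_α(x,y)/(1−α)`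
exists and equals `k`. -/
def RicciTendsto (E : V → V → Prop) (x y : V) (k : ℝ) : Prop :=
  Tendsto (fun α : ℝ => ricciAlpha E α x y / (1 - α)) (𝓝[<] (1 : ℝ)) (𝓝 k)

/-- A directed graph is Ricci-flat if `κ(x,y) = 0` for every edge `(x,y)`. -/
def RicciFlat (E : V → V → Prop) : Prop := ∀ x y : V, E x y → RicciTendsto E x y 0


set_option linter.unusedSectionVars false

namespace Stmt15Aux

/-- Structural lemma: out-degree 1 + strong connectivity + no loops forces a directed
cycle of length at least 2. -/
lemma exists_cycle (E : V → V → Prop) [Nonempty V] (hs : NoLoops E)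
    (hsc : StronglyConnected E) (hout1 : ∀ u : V, outDeg E u = 1) :
    ∃ n : ℕ, 2 ≤ n ∧ ∃ e : V ≃ ZMod n, ∀ u v : V, E u v ↔ e v = e u + 1 := by
  classical
  choose g hg using fun u => Set.ncard_eq_one.mp (hout1 u)
  have hEg : ∀ u v : V, E u v ↔ v = g u := by
    intro u v
    have := Set.ext_iff.1 (hg u) v
    simpa [outN] using this
  obtain ⟨x0⟩ := ‹Nonempty V›
  -- walks are iterates of g
  have hwalk : ∀ (m : ℕ) (f : ℕ → V), IsDiWalk E m f → ∀ i, i ≤ m → f i = g^[i] (f 0) := by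
    intro m f hf i
    induction i with
    | zero => intro _; simp
    | succ i ih =>
      intro him
      have h1 : f i = g^[i] (f 0) := ih (by omega)
      have h2 : E (f i) (f (i + 1)) := hf i (by omega)
      rw [hEg] at h2
      rw [h2, h1, Function.iterate_succ_apply']
  have key : ∀ x y : V, ∃ m, 1 ≤ m ∧ g^[m] x = y := by
    intro x y
    obtain ⟨m, hm, f, h0, hm', hw⟩ := hsc x y
    exact ⟨m, hm, by rw [← h0, ← hwalk m f hw m le_rfl, hm']⟩
  set P : Set ℕ := {m | 1 ≤ m ∧ g^[m] x0 = x0} with hP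
  have hPne : P.Nonempty := (key x0 x0).imp fun m hm => hm
  set p : ℕ := sInf P with hp
  have hpP : p ∈ P := Nat.sInf_mem hPne
  have hp1 : 1 ≤ p := hpP.1
  have hpx0 : g^[p] x0 = x0 := hpP.2
  have hp2 : 2 ≤ p := by
    rcases Nat.lt_or_ge p 2 with h | h
    · exfalso
      have hp1' : p = 1 := by omega
      have : g x0 = x0 := by simpa [hp1'] using hpx0
      exact hs x0 ((hEg x0 x0).2 this.symm)
    · exact h
  haveI : NeZero p := ⟨by omega⟩
  -- iterates are periodic with period p
  have hmul : ∀ q : ℕ, g^[p * q] x0 = x0 := by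
    intro q
    induction q with
    | zero => simp
    | succ q ih =>
      have : p * (q + 1) = p * q + p := by ring
      rw [this, Function.iterate_add_apply, hpx0, ih]
  have hmod : ∀ m : ℕ, g^[m] x0 = g^[m % p] x0 := by
    intro m
    conv_lhs => rw [← Nat.mod_add_div m p, Function.iterate_add_apply, hmul]
  -- the orbit map
  set φ : ZMod p → V := fun k => g^[k.val] x0 with hφ
  have hinj' : ∀ i j : ℕ, i ≤ j → j < p → g^[i] x0 = g^[j] x0 → i = j := by
    intro i j hij hjp heq
    by_contra hne
    have hij' : i < j := by omega
    have h1 : g^[p - j + i] x0 = x0 := by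
      have h3 := congrArg (g^[p - j]) heq
      rw [← Function.iterate_add_apply, ← Function.iterate_add_apply] at h3
      rw [h3, show p - j + j = p by omega, hpx0]
    have hmem : p - j + i ∈ P := ⟨by omega, h1⟩
    have := Nat.sInf_le hmem
    omega
  have hφinj : Function.Injective φ := by
    intro k l hkl
    have hk := ZMod.val_lt k
    have hl := ZMod.val_lt l
    have : k.val = l.val := by
      rcases le_total k.val l.val with h | h
      · exact hinj' _ _ h hl hkl
      · exact (hinj' _ _ h hk hkl.symm).symm
    exact ZMod.val_injective p this
  have hφsurj : Function.Surjective φ := by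
    intro u
    obtain ⟨m, _, hm⟩ := key x0 u
    refine ⟨(m : ZMod p), ?_⟩
    rw [hφ]
    simp only [ZMod.val_natCast]
    rw [← hmod, hm]
  set e : V ≃ ZMod p := (Equiv.ofBijective φ ⟨hφinj, hφsurj⟩).symm with he
  have heφ : ∀ u : V, φ (e u) = u := fun u =>
    (Equiv.ofBijective φ ⟨hφinj, hφsurj⟩).apply_symm_apply u
  have heφ' : ∀ k : ZMod p, e (φ k) = k := fun k =>
    (Equiv.ofBijective φ ⟨hφinj, hφsurj⟩).symm_apply_apply k
  haveI : Fact (1 < p) := ⟨by omega⟩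
  have hφsucc : ∀ k : ZMod p, φ (k + 1) = g (φ k) := by
    intro k
    have hval : (k + 1).val = (k.val + 1) % p := by
      rw [ZMod.val_add, ZMod.val_one]
    show g^[(k + 1).val] x0 = g (g^[k.val] x0)
    rw [hval, ← hmod, Function.iterate_succ_apply']
  refine ⟨p, hp2, e, fun u v => ?_⟩
  rw [hEg]
  constructor
  · intro h
    have hv : v = φ (e u + 1) := by rw [hφsucc, heφ]; exact h
    rw [hv, heφ']
  · intro h
    rw [← heφ v, h, hφsucc, heφ]

section Cycle

variable {n : ℕ} [NeZero n] (E : V → V → Prop) (e : V ≃ ZMod n)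
  (hE : ∀ u v : V, E u v ↔ e v = e u + 1)

include hE

lemma ddist_cycle (u v : V) : ddist E u v = (e v - e u).val := by
  have hwalkE : ∀ (m : ℕ) (f : ℕ → V), IsDiWalk E m f → ∀ i, i ≤ m →
      e (f i) = e (f 0) + (i : ZMod n) := by
    intro m f hf i
    induction i with
    | zero => intro _; simp
    | succ i ih =>
      intro him
      have h2 := (hE _ _).1 (hf i (by omega))
      rw [h2, ih (by omega)]
      push_cast
      ring
  set k := (e v - e u).val with hk
  have hmem : k ∈ {m : ℕ | ∃ f : ℕ → V, f 0 = u ∧ f m = v ∧ IsDiWalk E m f} := by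
    refine ⟨fun i => e.symm (e u + (i : ZMod n)), by simp, ?_, ?_⟩
    · show e.symm (e u + (k : ZMod n)) = v
      have : ((k : ℕ) : ZMod n) = e v - e u := by
        rw [hk, ZMod.natCast_val, ZMod.cast_id]
      rw [this]
      simp
    · intro i _
      rw [hE]
      simp only [Equiv.apply_symm_apply]
      push_cast
      ring
  refine le_antisymm (Nat.sInf_le hmem) (le_csInf ⟨k, hmem⟩ ?_)
  rintro m ⟨f, h0, hm, hw⟩
  have := hwalkE m f hw m le_rfl
  rw [h0, hm] at this
  have hcast : ((m : ℕ) : ZMod n) = e v - e u := by rw [this]; ring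
  have hkm : k = m % n := by rw [hk, ← hcast, ZMod.val_natCast]
  exact hkm ▸ Nat.mod_le m n

lemma outN_cycle (x : V) : outN E x = {e.symm (e x + 1)} := by
  ext v
  simp only [outN, Set.mem_setOf_eq, Set.mem_singleton_iff, hE]
  rw [Equiv.eq_symm_apply]

lemma inN_cycle (x : V) : inN E x = {e.symm (e x - 1)} := by
  ext v
  simp only [inN, Set.mem_setOf_eq, Set.mem_singleton_iff, hE]
  rw [Equiv.eq_symm_apply]
  exact ⟨fun h => by rw [h]; ring, fun h => by rw [h]; ring⟩

lemma inDeg_cycle (x : V) : inDeg E x = 1 := by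
  rw [inDeg, inN_cycle E e hE, Set.ncard_singleton]

lemma deg_cycle_of_three (hn : 3 ≤ n) (x : V) : deg E x = 2 := by
  rw [deg, nbhd, inN_cycle E e hE, outN_cycle E e hE]
  rw [Set.singleton_union]
  rw [Set.ncard_pair]
  intro h
  have h2 : (2 : ZMod n) = 0 := by
    have := e.symm.injective h
    have h3 : e x + 1 - (e x - 1) = 0 := by rw [← this]; ring
    calc (2 : ZMod n) = e x + 1 - (e x - 1) := by ring
      _ = 0 := h3
  have : ((2 : ℕ) : ZMod n) = 0 := by push_cast; exact h2
  rw [ZMod.natCast_eq_zero_iff] at this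
  have := Nat.le_of_dvd (by norm_num) this
  omega

end Cycle

lemma finsum_pair {a b : V} (hab : a ≠ b) (f : V → ℝ)
    (hf : ∀ v, v ≠ a → v ≠ b → f v = 0) : ∑ᶠ v, f v = f a + f b := by
  classical
  rw [finsum_eq_sum_of_support_subset f (s := {a, b}) ?_]
  · rw [Finset.sum_insert (by simp [hab]), Finset.sum_singleton]
  · intro v hv
    simp only [Finset.coe_insert, Finset.coe_singleton, Set.mem_insert_iff,
      Set.mem_singleton_iff]
    by_contra h
    push_neg at h
    exact hv (hf v h.1 h.2)

/-- Lower bound on the cost of any coupling, via a 1-Lipschitz function. -/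
lemma coupling_cost_lb (E : V → V → Prop) {α : ℝ} {x y : V} {A : V → V → ℝ}
    (hA : IsCoupling E α x y A) (f : V → ℝ)
    (hf : ∀ u v : V, f v - f u ≤ (ddist E u v : ℝ)) :
    (∑ᶠ v, mAlpha E α y v * f v) - (∑ᶠ u, mAlpha E α x u * f u) ≤
      ∑ᶠ u, ∑ᶠ v, A u v * (ddist E u v : ℝ) := by
  classical
  obtain ⟨hfin, hbd, hrow, hcol⟩ := hA
  set S : Finset (V × V) := hfin.toFinset with hS
  set s1 : Finset V := S.image Prod.fst with hs1
  set s2 : Finset V := S.image Prod.snd with hs2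
  have hz : ∀ u v : V, A u v ≠ 0 → u ∈ s1 ∧ v ∈ s2 := by
    intro u v h
    have hmem : (u, v) ∈ S := hfin.mem_toFinset.2 h
    exact ⟨Finset.mem_image_of_mem _ hmem, Finset.mem_image_of_mem _ hmem⟩
  have hz1 : ∀ u v : V, u ∉ s1 → A u v = 0 := fun u v h => by
    by_contra h'; exact h (hz u v h').1
  have hz2 : ∀ u v : V, v ∉ s2 → A u v = 0 := fun u v h => by
    by_contra h'; exact h (hz u v h').2
  have hrow' : ∀ u, ∑ v ∈ s2, A u v = mAlpha E α x u := by
    intro u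
    rw [← hrow u]
    exact (finsum_eq_sum_of_support_subset _
      (fun v hv => by by_contra h; exact hv (hz2 u v h))).symm
  have hcol' : ∀ v, ∑ u ∈ s1, A u v = mAlpha E α y v := by
    intro v
    rw [← hcol v]
    exact (finsum_eq_sum_of_support_subset _
      (fun u hu => by by_contra h; exact hu (hz1 u v h))).symm
  have hcost : (∑ᶠ u, ∑ᶠ v, A u v * (ddist E u v : ℝ)) =
      ∑ u ∈ s1, ∑ v ∈ s2, A u v * (ddist E u v : ℝ) := by
    have hin : ∀ u, (∑ᶠ v, A u v * (ddist E u v : ℝ)) =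
        ∑ v ∈ s2, A u v * (ddist E u v : ℝ) := by
      intro u
      refine finsum_eq_sum_of_support_subset _ (fun v hv => ?_)
      by_contra h
      exact hv (by simp only [hz2 u v h, zero_mul])
    rw [finsum_congr hin]
    refine finsum_eq_sum_of_support_subset _ (fun u hu => ?_)
    by_contra h
    refine hu (Finset.sum_eq_zero fun v _ => ?_)
    rw [hz1 u v h, zero_mul]
  have hmy : (∑ᶠ v, mAlpha E α y v * f v) = ∑ v ∈ s2, mAlpha E α y v * f v := by
    refine finsum_eq_sum_of_support_subset _ (fun v hv => ?_)
    by_contra h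
    refine hv ?_
    simp only
    rw [← hcol' v, Finset.sum_eq_zero (fun u _ => hz2 u v h), zero_mul]
  have hmx : (∑ᶠ u, mAlpha E α x u * f u) = ∑ u ∈ s1, mAlpha E α x u * f u := by
    refine finsum_eq_sum_of_support_subset _ (fun u hu => ?_)
    by_contra h
    refine hu ?_
    simp only
    rw [← hrow' u, Finset.sum_eq_zero (fun v _ => hz1 u v h), zero_mul]
  rw [hcost, hmy, hmx]
  have key : (∑ v ∈ s2, mAlpha E α y v * f v) - ∑ u ∈ s1, mAlpha E α x u * f u =
      ∑ u ∈ s1, ∑ v ∈ s2, A u v * (f v - f u) := by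
    have h1 : (∑ v ∈ s2, mAlpha E α y v * f v) =
        ∑ u ∈ s1, ∑ v ∈ s2, A u v * f v := by
      rw [Finset.sum_comm]
      refine Finset.sum_congr rfl (fun v _ => ?_)
      rw [← hcol' v, Finset.sum_mul]
    have h2 : (∑ u ∈ s1, mAlpha E α x u * f u) =
        ∑ u ∈ s1, ∑ v ∈ s2, A u v * f u := by
      refine Finset.sum_congr rfl (fun u _ => ?_)
      rw [← hrow' u, Finset.sum_mul]
    rw [h1, h2, ← Finset.sum_sub_distrib]
    refine Finset.sum_congr rfl (fun u _ => ?_)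
    rw [← Finset.sum_sub_distrib]
    refine Finset.sum_congr rfl (fun v _ => ?_)
    ring
  rw [key]
  refine Finset.sum_le_sum (fun u _ => Finset.sum_le_sum (fun v _ => ?_))
  exact mul_le_mul_of_nonneg_left (hf u v) (hbd u v).1

/-- Every admissible transport cost is nonnegative, so the cost set is bounded below. -/
lemma cost_set_bddBelow (E : V → V → Prop) (α : ℝ) (x y : V) :
    BddBelow {w : ℝ | ∃ A : V → V → ℝ, IsCoupling E α x y A ∧
      w = ∑ᶠ u, ∑ᶠ v, A u v * (ddist E u v : ℝ)} := by
  refine ⟨0, ?_⟩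
  rintro w ⟨A, hA, rfl⟩
  refine finsum_nonneg (fun u => finsum_nonneg (fun v => ?_))
  exact mul_nonneg (hA.2.1 u v).1 (Nat.cast_nonneg _)

section Three

variable {n : ℕ} (E : V → V → Prop) (e : V ≃ ZMod n)
  (hE : ∀ u v : V, E u v ↔ e v = e u + 1)

include hE

open Classical in
/-- Value of the measure `m_a^α` on a cycle of length at least 3. -/
lemma mAlpha_cycle (hn : 3 ≤ n) (α : ℝ) (a b : V) (hab : E a b) (v : V) :
    mAlpha E α a v = if v = a then α + (1 - α) / 2 else if v = b then (1 - α) / 2 else 0 := by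
  haveI : NeZero n := ⟨by omega⟩
  have hEa : ∀ w, E a w ↔ w = b := by
    intro w
    rw [hE, ← (hE a b).1 hab]
    exact e.apply_eq_iff_eq
  simp only [mAlpha, deg_cycle_of_three E e hE hn, inDeg_cycle E e hE, hEa]
  by_cases h1 : v = a
  · simp only [h1, if_true]
    push_cast
    ring
  · simp only [h1, if_false]
    by_cases h2 : v = b
    · simp only [h2, if_true]
      push_cast
      ring
    · simp only [h2, if_false]

lemma wass_cycle (hn : 3 ≤ n) {α : ℝ} (hα : α ∈ Set.Ioo (0 : ℝ) 1) {x y : V}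
    (hxy : E x y) : Wass E α x y = 1 := by
  classical
  haveI : NeZero n := ⟨by omega⟩
  haveI : Fact (1 < n) := ⟨by omega⟩
  have hey : e y = e x + 1 := (hE x y).1 hxy
  set z : V := e.symm (e x + 2) with hz
  have hez : e z = e x + 2 := e.apply_symm_apply _
  have hyz : E y z := (hE y z).2 (by rw [hez, hey]; ring)
  have h10 : (1 : ZMod n) ≠ 0 := by
    intro h
    have : ((1 : ℕ) : ZMod n) = 0 := by push_cast; exact h
    rw [ZMod.natCast_eq_zero_iff] at this
    have := Nat.le_of_dvd (by norm_num) this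
    omega
  have h20 : (2 : ZMod n) ≠ 0 := by
    intro h
    have : ((2 : ℕ) : ZMod n) = 0 := by push_cast; exact h
    rw [ZMod.natCast_eq_zero_iff] at this
    have := Nat.le_of_dvd (by norm_num) this
    omega
  have hxy' : x ≠ y := by
    intro h
    rw [h] at hey
    exact h10 (by linear_combination -hey)
  have hyz' : y ≠ z := by
    intro h
    rw [h, hez] at hey
    exact h10 (by linear_combination hey)
  have hxz' : x ≠ z := by
    intro h
    rw [← h] at hez
    exact h20 (by linear_combination -hez)
  have hval1 : ((1 : ZMod n)).val = 1 := ZMod.val_one n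
  have hval2 : ((2 : ZMod n)).val = 2 := by
    have : ((2 : ℕ) : ZMod n) = (2 : ZMod n) := by push_cast; ring
    rw [← this, ZMod.val_natCast, Nat.mod_eq_of_lt (by omega)]
  have hdxy : ddist E x y = 1 := by
    rw [ddist_cycle E e hE, hey, add_sub_cancel_left, hval1]
  have hdxz : ddist E x z = 2 := by
    rw [ddist_cycle E e hE, hez, add_sub_cancel_left, hval2]
  have hdyy : ddist E y y = 0 := by
    rw [ddist_cycle E e hE, sub_self, ZMod.val_zero]
  have hmx := mAlpha_cycle E e hE hn α x y hxy
  have hmy := mAlpha_cycle E e hE hn α y z hyz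
  -- the explicit optimal coupling
  set A : V → V → ℝ := fun u v =>
    if u = x ∧ v = y then α else if u = y ∧ v = y then (1 - α) / 2
    else if u = x ∧ v = z then (1 - α) / 2 else 0 with hA
  have hAxy : A x y = α := by simp [hA]
  have hAyy : A y y = (1 - α) / 2 := by simp [hA, Ne.symm hxy']
  have hAxz : A x z = (1 - α) / 2 := by simp [hA, Ne.symm hyz', hxz']
  have hAx0 : ∀ v, v ≠ y → v ≠ z → A x v = 0 := by
    intro v h1 h2; simp [hA, h1, h2]
  have hAy0 : ∀ v, v ≠ y → A y v = 0 := by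
    intro v h1; simp [hA, h1, Ne.symm hxy']
  have hAu0 : ∀ u v, u ≠ x → u ≠ y → A u v = 0 := by
    intro u v h1 h2; simp [hA, h1, h2]
  have hAcy : ∀ u, u ≠ x → u ≠ y → A u y = 0 := fun u h1 h2 => hAu0 u y h1 h2
  have hAcz : ∀ u, u ≠ x → A u z = 0 := by
    intro u h1
    by_cases h2 : u = y
    · subst h2; exact hAy0 z (Ne.symm hyz')
    · exact hAu0 u z h1 h2
  have hrowx : (∑ᶠ v, A x v) = α + (1 - α) / 2 := by
    rw [finsum_pair hyz' (fun v => A x v) hAx0, hAxy, hAxz]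
  have hrowy : (∑ᶠ v, A y v) = (1 - α) / 2 := by
    rw [finsum_eq_single (fun v => A y v) y (fun v hv => hAy0 v hv), hAyy]
  have hcoly : (∑ᶠ u, A u y) = α + (1 - α) / 2 := by
    rw [finsum_pair hxy' (fun u => A u y) (fun u h1 h2 => hAcy u h1 h2), hAxy, hAyy]
  have hcolz : (∑ᶠ u, A u z) = (1 - α) / 2 := by
    rw [finsum_eq_single (fun u => A u z) x (fun u hu => hAcz u hu), hAxz]
  have hAc : IsCoupling E α x y A := by
    refine ⟨?_, ?_, ?_, ?_⟩
    · refine Set.Finite.subset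
        ((((Set.finite_singleton ((x, z) : V × V)).insert (y, y)).insert (x, y))) ?_
      intro p hp
      simp only [Function.mem_support, hA] at hp
      simp only [Set.mem_insert_iff, Set.mem_singleton_iff]
      by_cases h1 : p.1 = x ∧ p.2 = y
      · left; exact Prod.ext h1.1 h1.2
      by_cases h2 : p.1 = y ∧ p.2 = y
      · right; left; exact Prod.ext h2.1 h2.2
      by_cases h3 : p.1 = x ∧ p.2 = z
      · right; right; exact Prod.ext h3.1 h3.2
      exact absurd (by simp [h1, h2, h3]) hp
    · intro u v
      simp only [hA]
      obtain ⟨hα0, hα1⟩ := hα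
      split_ifs <;> constructor <;> linarith
    · intro u
      rw [hmx u]
      by_cases h1 : u = x
      · subst h1; rw [hrowx]; simp
      · by_cases h2 : u = y
        · subst h2; rw [hrowy]; simp [h1]
        · rw [finsum_eq_zero_of_forall_eq_zero (fun v => hAu0 u v h1 h2)]
          simp [h1, h2]
    · intro v
      rw [hmy v]
      by_cases h1 : v = y
      · subst h1; rw [hcoly]; simp
      · by_cases h2 : v = z
        · subst h2; rw [hcolz]; simp [h1, Ne.symm hyz']
        · rw [finsum_eq_zero_of_forall_eq_zero (fun u => by
            by_cases hu1 : u = x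
            · subst hu1; exact hAx0 v h1 h2
            · by_cases hu2 : u = y
              · subst hu2; exact hAy0 v h1
              · exact hAu0 u v hu1 hu2)]
          simp [h1, h2]
  have hcost : (∑ᶠ u, ∑ᶠ v, A u v * (ddist E u v : ℝ)) = 1 := by
    have hinner_x : (∑ᶠ v, A x v * (ddist E x v : ℝ)) = α + (1 - α) := by
      rw [finsum_pair hyz' (fun v => A x v * (ddist E x v : ℝ)) (fun v hv1 hv2 => by
        simp only [hAx0 v hv1 hv2, zero_mul])]
      rw [hAxy, hAxz, hdxy, hdxz]
      push_cast
      ring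
    have hinner_y : (∑ᶠ v, A y v * (ddist E y v : ℝ)) = 0 := by
      rw [finsum_eq_single (fun v => A y v * (ddist E y v : ℝ)) y (fun v hv => by
        simp only [hAy0 v hv, zero_mul])]
      simp [hdyy]
    rw [finsum_eq_single _ x (fun u hu => ?_)]
    · rw [hinner_x]; ring
    · by_cases h2 : u = y
      · subst h2; exact hinner_y
      · refine finsum_eq_zero_of_forall_eq_zero (fun v => ?_)
        simp only [hAu0 u v hu h2, zero_mul]
  have hmem : (1 : ℝ) ∈ {w : ℝ | ∃ A : V → V → ℝ, IsCoupling E α x y A ∧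
      w = ∑ᶠ u, ∑ᶠ v, A u v * (ddist E u v : ℝ)} := ⟨A, hAc, hcost.symm⟩
  -- lower bound via the Lipschitz function w ↦ d(x, w)
  have hlb : ∀ w ∈ {w : ℝ | ∃ A : V → V → ℝ, IsCoupling E α x y A ∧
      w = ∑ᶠ u, ∑ᶠ v, A u v * (ddist E u v : ℝ)}, (1 : ℝ) ≤ w := by
    rintro w ⟨B, hB, rfl⟩
    set f : V → ℝ := fun v => ((e v - e x).val : ℝ) with hf
    have hflip : ∀ u v : V, f v - f u ≤ (ddist E u v : ℝ) := by
      intro u v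
      rw [sub_le_iff_le_add]
      have h := ZMod.val_add_le (e v - e u) (e u - e x)
      rw [show e v - e u + (e u - e x) = e v - e x by ring] at h
      calc f v = ((e v - e x).val : ℝ) := rfl
        _ ≤ (((e v - e u).val + (e u - e x).val : ℕ) : ℝ) := by exact_mod_cast h
        _ = ((ddist E u v : ℕ) : ℝ) + f u := by
            rw [ddist_cycle E e hE]
            first
            | (push_cast; ring)
            | push_cast
    have hfx : f x = 0 := by simp [hf]
    have hfy : f y = 1 := by
      simp only [hf, hey, add_sub_cancel_left, hval1]; norm_num
    have hfz : f z = 2 := by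
      simp only [hf, hez, add_sub_cancel_left, hval2]; norm_num
    have hsy : (∑ᶠ v, mAlpha E α y v * f v) = (α + (1 - α) / 2) * 1 + (1 - α) / 2 * 2 := by
      rw [finsum_pair hyz' (fun v => mAlpha E α y v * f v) (fun v hv1 hv2 => by
        simp only [hmy v, hv1, hv2, if_false, zero_mul])]
      rw [hmy y, hmy z]
      simp [Ne.symm hyz', hfy, hfz]
    have hsx : (∑ᶠ u, mAlpha E α x u * f u) = (1 - α) / 2 := by
      rw [finsum_pair hxy' (fun u => mAlpha E α x u * f u) (fun u hu1 hu2 => by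
        simp only [hmx u, hu1, hu2, if_false, zero_mul])]
      rw [hmx x, hmx y]
      simp [Ne.symm hxy', hfx, hfy]
    have := coupling_cost_lb E hB f hflip
    rw [hsy, hsx] at this
    linarith
  exact le_antisymm (csInf_le (cost_set_bddBelow E α x y) hmem) (le_csInf ⟨1, hmem⟩ hlb)

lemma ricciFlat_cycle (hn : 3 ≤ n) : RicciFlat E := by
  haveI : NeZero n := ⟨by omega⟩
  haveI : Fact (1 < n) := ⟨by omega⟩
  intro x y hxy
  have hdxy : ddist E x y = 1 := by
    rw [ddist_cycle E e hE, (hE x y).1 hxy, add_sub_cancel_left, ZMod.val_one]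
  have hev : ∀ᶠ α in 𝓝[<] (1 : ℝ), ricciAlpha E α x y / (1 - α) = 0 := by
    filter_upwards [Ioo_mem_nhdsLT_of_mem
      (show (1 : ℝ) ∈ Set.Ioc 0 1 by norm_num)] with α hα
    rw [ricciAlpha, wass_cycle E e hE hn hα hxy, hdxy]
    norm_num
  exact Tendsto.congr' (by filter_upwards [hev] with α h using h.symm) tendsto_const_nhds

end Three

section Two

variable (E : V → V → Prop) (e : V ≃ ZMod 2)
  (hE : ∀ u v : V, E u v ↔ e v = e u + 1)

include hE

lemma deg_two (x : V) : deg E x = 1 := by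
  have h2 : ∀ a : ZMod 2, a - 1 = a + 1 := by decide
  rw [deg, nbhd, inN_cycle E e hE, outN_cycle E e hE, h2 (e x), Set.union_self,
    Set.ncard_singleton]

open Classical in
lemma mAlpha_two (α : ℝ) (a b : V) (hab : E a b) (v : V) :
    mAlpha E α a v = if v = a then 1 else if v = b then 1 - α else 0 := by
  have hEa : ∀ w, E a w ↔ w = b := by
    intro w
    rw [hE, ← (hE a b).1 hab]
    exact e.apply_eq_iff_eq
  simp only [mAlpha, deg_two E e hE, inDeg_cycle E e hE, hEa]
  by_cases h1 : v = a
  · simp only [h1, if_true]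
    push_cast
    ring
  · simp only [h1, if_false]
    by_cases h2 : v = b
    · simp only [h2, if_true]
      push_cast
      ring
    · simp only [h2, if_false]

lemma not_ricciFlat_two : ¬ RicciFlat E := by
  classical
  intro hRF
  set x : V := e.symm 0 with hx
  set y : V := e.symm 1 with hy
  have hex : e x = 0 := e.apply_symm_apply 0
  have hey : e y = 1 := e.apply_symm_apply 1
  have hxy : E x y := (hE x y).2 (by rw [hex, hey]; decide)
  have hyx : E y x := (hE y x).2 (by rw [hex, hey]; decide)
  have hxy' : x ≠ y := by
    intro h
    apply_fun e at h
    rw [hex, hey] at h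
    exact absurd h (by decide)
  have hdxy : ddist E x y = 1 := by rw [ddist_cycle E e hE, hex, hey]; decide
  have hdxx : ddist E x x = 0 := by rw [ddist_cycle E e hE]; simp
  have hdyy : ddist E y y = 0 := by rw [ddist_cycle E e hE]; simp
  have hW : ∀ α : ℝ, α ∈ Set.Ioo (0 : ℝ) 1 → Wass E α x y ≤ α := by
    intro α hα
    have hmx := mAlpha_two E e hE α x y hxy
    have hmy := mAlpha_two E e hE α y x hyx
    set A : V → V → ℝ := fun u v =>
      if u = x ∧ v = x then 1 - α else if u = x ∧ v = y then α
      else if u = y ∧ v = y then 1 - α else 0 with hA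
    have hAxx : A x x = 1 - α := by simp [hA]
    have hAxy : A x y = α := by simp [hA, hxy', Ne.symm hxy']
    have hAyy : A y y = 1 - α := by simp [hA, Ne.symm hxy']
    have hAx0 : ∀ v, v ≠ x → v ≠ y → A x v = 0 := by
      intro v h1 h2; simp [hA, h1, h2]
    have hAy0 : ∀ v, v ≠ y → A y v = 0 := by
      intro v h1; simp [hA, h1, Ne.symm hxy']
    have hAu0 : ∀ u v, u ≠ x → u ≠ y → A u v = 0 := by
      intro u v h1 h2; simp [hA, h1, h2]
    have hAc : IsCoupling E α x y A := by
      refine ⟨?_, ?_, ?_, ?_⟩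
      · refine Set.Finite.subset
          ((((Set.finite_singleton ((y, y) : V × V)).insert (x, y)).insert (x, x))) ?_
        intro p hp
        simp only [Function.mem_support, hA] at hp
        simp only [Set.mem_insert_iff, Set.mem_singleton_iff]
        by_cases h1 : p.1 = x ∧ p.2 = x
        · left; exact Prod.ext h1.1 h1.2
        by_cases h2 : p.1 = x ∧ p.2 = y
        · right; left; exact Prod.ext h2.1 h2.2
        by_cases h3 : p.1 = y ∧ p.2 = y
        · right; right; exact Prod.ext h3.1 h3.2
        exact absurd (by simp [h1, h2, h3]) hp
      · intro u v
        simp only [hA]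
        obtain ⟨hα0, hα1⟩ := hα
        split_ifs <;> constructor <;> linarith
      · intro u
        rw [hmx u]
        by_cases h1 : u = x
        · subst h1
          rw [finsum_pair hxy' (fun v => A x v) hAx0, hAxx, hAxy]
          simp
        · by_cases h2 : u = y
          · subst h2
            rw [finsum_eq_single (fun v => A y v) y (fun v hv => hAy0 v hv), hAyy]
            simp [h1]
          · rw [finsum_eq_zero_of_forall_eq_zero (fun v => hAu0 u v h1 h2)]
            simp [h1, h2]
      · intro v
        rw [hmy v]
        by_cases h1 : v = x
        · subst h1
          rw [finsum_eq_single (fun u => A u x) x (fun u hu => by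
            by_cases hu2 : u = y
            · subst hu2; exact hAy0 x hxy'
            · exact hAu0 u x hu hu2), hAxx]
          simp [hxy']
        · by_cases h2 : v = y
          · subst h2
            rw [finsum_pair hxy' (fun u => A u y) (fun u hu1 hu2 => hAu0 u y hu1 hu2),
              hAxy, hAyy]
            simp [h1]
          · rw [finsum_eq_zero_of_forall_eq_zero (fun u => by
              by_cases hu1 : u = x
              · subst hu1; exact hAx0 v h1 h2
              · by_cases hu2 : u = y
                · subst hu2; exact hAy0 v h2
                · exact hAu0 u v hu1 hu2)]
            simp [h1, h2]
    have hcost : (∑ᶠ u, ∑ᶠ v, A u v * (ddist E u v : ℝ)) = α := by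
      have hinner_x : (∑ᶠ v, A x v * (ddist E x v : ℝ)) = α := by
        rw [finsum_pair hxy' (fun v => A x v * (ddist E x v : ℝ)) (fun v hv1 hv2 => by
          simp only [hAx0 v hv1 hv2, zero_mul])]
        rw [hAxx, hAxy, hdxx, hdxy]
        push_cast
        ring
      have hinner_y : (∑ᶠ v, A y v * (ddist E y v : ℝ)) = 0 := by
        rw [finsum_eq_single (fun v => A y v * (ddist E y v : ℝ)) y (fun v hv => by
          simp only [hAy0 v hv, zero_mul])]
        simp [hdyy]
      rw [finsum_eq_single _ x (fun u hu => ?_)]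
      · exact hinner_x
      · by_cases h2 : u = y
        · subst h2; exact hinner_y
        · refine finsum_eq_zero_of_forall_eq_zero (fun v => ?_)
          simp only [hAu0 u v hu h2, zero_mul]
    exact csInf_le (cost_set_bddBelow E α x y) ⟨A, hAc, hcost.symm⟩
  have ht := hRF x y hxy
  have hev : ∀ᶠ α in 𝓝[<] (1 : ℝ), 1 ≤ ricciAlpha E α x y / (1 - α) := by
    filter_upwards [Ioo_mem_nhdsLT_of_mem
      (show (1 : ℝ) ∈ Set.Ioc 0 1 by norm_num)] with α hα
    have h1 : Wass E α x y ≤ α := hW α hα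
    have h2 : (0 : ℝ) < 1 - α := by linarith [hα.2]
    rw [ricciAlpha, hdxy, Nat.cast_one, div_one, le_div_iff₀ h2, one_mul]
    linarith
  have := ge_of_tendsto ht hev
  linarith

end Two

end Stmt15Aux

theorem stmt_15 (E : V → V → Prop) [Nonempty V] (hlf : LocFin E) (hs : NoLoops E) (hsc : StronglyConnected E)
    (d : ℕ) (hreg : ∀ v : V, deg E v = d)
    (ha : ∀ x y : V, E x y → outN E x ∩ outN E y = ∅)
    (hout1 : ∀ u : V, outDeg E u = 1) :
    RicciFlat E ↔
      ∃ n : ℕ, 3 ≤ n ∧ ∃ e : V ≃ ZMod n, ∀ u v : V, E u v ↔ e v = e u + 1 := by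
  obtain ⟨p, hp2, e, hEe⟩ := Stmt15Aux.exists_cycle E hs hsc hout1
  constructor
  · intro hRF
    rcases Nat.lt_or_ge p 3 with h3 | h3
    · exfalso
      have hp2' : p = 2 := by omega
      subst hp2'
      exact Stmt15Aux.not_ricciFlat_two E e hEe hRF
    · exact ⟨p, h3, e, hEe⟩
  · rintro ⟨m, hm, e', hEe'⟩
    exact Stmt15Aux.ricciFlat_cycle E e' hEe' hm
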